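/- For r ∈ {1, 2, 4}: the greatest common divisor of the set {p^r(p^r − 1) : p prime} equals 2^r(2^r − 1); explicitly, it is 2 for r = 1, 12 for r = 2, and 240 for r = 4. -/
import Mathlib
set_option maxRecDepth 100000

lemma aux_dvd (k r : ℕ) [NeZero k] (h : ∀ x : ZMod k, x ^ r * (x ^ r - 1) = 0)
    (n : ℤ) : (k : ℤ) ∣ n ^ r * (n ^ r - 1) := by
  have := (ZMod.intCast_zmod_eq_zero_iff_dvd (n ^ r * (n ^ r - 1)) k).mp
  apply this
  push_cast
  exact h _

/-- For `r ∈ {1,2,4}`, the gcd of `{p^r(p^r − 1) : p prime}` is `2^r(2^r − 1)`,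
which equals `2`, `12`, `240` for `r = 1, 2, 4` respectively. -/
theorem stmt_10 (r : ℕ) (hr : r = 1 ∨ r = 2 ∨ r = 4) :
    (∀ p : ℕ, p.Prime →
      (2 ^ r * (2 ^ r - 1) : ℤ) ∣ (p : ℤ) ^ r * ((p : ℤ) ^ r - 1)) ∧
    (∀ d : ℤ, (∀ p : ℕ, p.Prime → d ∣ (p : ℤ) ^ r * ((p : ℤ) ^ r - 1)) →
      d ∣ (2 ^ r * (2 ^ r - 1) : ℤ)) ∧
    ((2 ^ r * (2 ^ r - 1) : ℤ) = if r = 1 then 2 else if r = 2 then 12 else 240) := by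
  refine ⟨?_, ?_, ?_⟩
  · intro p hp
    rcases hr with rfl | rfl | rfl
    · have := aux_dvd 2 1 (by decide) (p : ℤ); norm_num at this ⊢; exact this
    · have := aux_dvd 12 2 (by decide) (p : ℤ); norm_num at this ⊢; exact this
    · have := aux_dvd 240 4 (by decide) (p : ℤ); norm_num at this ⊢; exact this
  · intro d hd
    have h2 := hd 2 Nat.prime_two
    norm_num at h2 ⊢
    exact h2
  · rcases hr with rfl | rfl | rfl <;> norm_num
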